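/- For the transposition (x y) in the symmetric group, and a k-cycle (a_1 a_2 ... a_k) on entries disjoint from {x, y}, the product (x a_1)(x a_2)···(x a_{k-1})·(y a_k)(x a_k)(y a_1) composed with (a_1 ... a_k) equals the transposition (x y). -/

import Mathlib

private lemma swap3 {y b c : ℕ} (hyb : b ≠ y) (hyc : c ≠ y) (hbc : b ≠ c) :
    Equiv.swap y b * Equiv.swap b c = Equiv.swap y c * Equiv.swap y b := by
  have h1 := hyb.symm; have h2 := hyc.symm; have h3 := hbc.symm
  ext z
  simp only [Equiv.Perm.mul_apply]
  by_cases c1 : z = y <;> by_cases c2 : z = b <;> by_cases c3 : z = c <;>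
    simp_all [Equiv.swap_apply_def]

private lemma swapfin {x y b : ℕ} (hbx : b ≠ x) (hby : b ≠ y) (hxy : x ≠ y) :
    Equiv.swap x b * (Equiv.swap x y * Equiv.swap y b) = Equiv.swap x y := by
  have h1 := hbx.symm; have h2 := hby.symm; have h3 := hxy.symm
  ext z
  simp only [Equiv.Perm.mul_apply]
  by_cases c1 : z = x <;> by_cases c2 : z = y <;> by_cases c3 : z = b <;>
    simp_all [Equiv.swap_apply_def]

private lemma key (x y : ℕ) (hxy : x ≠ y) (k : ℕ) (hk : 2 ≤ k) (a : ℕ → ℕ)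
    (ha : ∀ i, 1 ≤ i → i ≤ k → a i ≠ x ∧ a i ≠ y)
    (hinj : ∀ i j, 1 ≤ i → i ≤ k → 1 ≤ j → j ≤ k → a i = a j → i = j) :
    (((List.range (k - 1)).map fun i => Equiv.swap x (a (i + 1))).prod *
        (Equiv.swap y (a k) * Equiv.swap x (a k) * Equiv.swap y (a 1))) *
      ((List.range k).map fun i => a (i + 1)).formPerm =
      Equiv.swap x y := by
  induction k, hk using Nat.le_induction generalizing a with
  | base =>
    obtain ⟨hx1, hy1⟩ := ha 1 (by omega) (by omega)
    obtain ⟨hx2, hy2⟩ := ha 2 (by omega) (by omega)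
    have h12 : a 1 ≠ a 2 := fun h => by
      simpa using hinj 1 2 (by omega) (by omega) (by omega) (by omega) h
    have hx1' := hx1.symm; have hy1' := hy1.symm; have hx2' := hx2.symm
    have hy2' := hy2.symm; have h12' := h12.symm; have hxy' := hxy.symm
    simp only [show (2:ℕ) - 1 = 1 from rfl, List.range_succ, List.range_zero,
      List.nil_append, List.map_cons, List.map_nil, List.prod_cons, List.prod_nil,
      List.cons_append, List.formPerm_pair, mul_one]
    clear ha hinj
    ext z
    simp only [Equiv.Perm.mul_apply]
    by_cases c1 : z = x <;> by_cases c2 : z = y <;> by_cases c3 : z = a 1 <;>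
      by_cases c4 : z = a 2 <;> simp_all [Equiv.swap_apply_def]
  | succ n hn IH =>
    obtain ⟨m, rfl⟩ : ∃ m, n = m + 1 := ⟨n - 1, by omega⟩
    -- facts
    obtain ⟨hx1, hy1⟩ := ha 1 (by omega) (by omega)
    obtain ⟨hx2, hy2⟩ := ha 2 (by omega) (by omega)
    obtain ⟨hxK, hyK⟩ := ha (m + 2) (by omega) (by omega)
    have h12 : a 1 ≠ a 2 := fun h => by
      simpa using hinj 1 2 (by omega) (by omega) (by omega) (by omega) h
    -- the inner list
    set l : List ℕ := a 2 :: (List.range m).map (fun i => a (i + 1 + 1 + 1)) with hl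
    have hy_notmem : y ∉ l := by
      simp only [hl, List.mem_cons, List.mem_map, List.mem_range]
      push_neg
      refine ⟨(ha 2 (by omega) (by omega)).2.symm, fun i hi => ?_⟩
      exact fun h => (ha (i + 1 + 1 + 1) (by omega) (by omega)).2 h
    have ha1_notmem : a 1 ∉ l := by
      simp only [hl, List.mem_cons, List.mem_map, List.mem_range]
      push_neg
      constructor
      · exact h12
      · intro i hi h
        have := hinj (i + 1 + 1 + 1) 1 (by omega) (by omega) (by omega) (by omega) h
        omega
    have hdisj : Equiv.Perm.Disjoint (Equiv.swap y (a 1)) l.formPerm := by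
      intro z
      by_cases c1 : z = y
      · right; subst c1; exact List.formPerm_apply_of_notMem hy_notmem
      by_cases c2 : z = a 1
      · right; subst c2; exact List.formPerm_apply_of_notMem ha1_notmem
      · left; exact Equiv.swap_apply_of_ne_of_ne c1 c2
    have hc : Equiv.swap y (a 1) * l.formPerm = l.formPerm * Equiv.swap y (a 1) :=
      hdisj.commute.eq
    have h3 : Equiv.swap y (a 1) * Equiv.swap (a 1) (a 2) =
        Equiv.swap y (a 2) * Equiv.swap y (a 1) := swap3 hy1 hy2 h12
    -- IH for shifted sequence
    have hIH := IH (fun i => a (i + 1))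
      (fun i h1 h2 => ha (i + 1) (by omega) (by omega))
      (fun i j h1 h2 h3 h4 heq => by
        have := hinj (i + 1) (j + 1) (by omega) (by omega) (by omega) (by omega) heq
        omega)
    simp only [Nat.add_sub_cancel, List.range_succ_eq_map, List.map_cons, List.map_map,
      List.prod_cons, Function.comp_def, Nat.succ_eq_add_one, zero_add] at hIH ⊢
    rw [List.formPerm_cons_cons]
    rw [← hl] at hIH ⊢
    have h4 : Equiv.swap y (a 1) * (Equiv.swap (a 1) (a 2) * l.formPerm) =
        Equiv.swap y (a 2) * (l.formPerm * Equiv.swap y (a 1)) := by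
      rw [← mul_assoc, h3, mul_assoc, hc]
    have hIH' := congrArg (· * Equiv.swap y (a 1)) hIH
    simp only [mul_assoc] at hIH' ⊢
    rw [h4, hIH']
    exact swapfin hx1 hy1 hxy

theorem stmt0 (n k : ℕ) (hk : 2 ≤ k) (a : ℕ → ℕ)
    (ha : ∀ i ∈ Finset.Icc 1 k, a i ∈ Finset.Icc 1 n)
    (hinj : Set.InjOn a (Set.Icc 1 k)) :
    (((List.range (k - 1)).map fun i => Equiv.swap (n + 1) (a (i + 1))).prod *
        (Equiv.swap (n + 2) (a k) * Equiv.swap (n + 1) (a k) *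
          Equiv.swap (n + 2) (a 1))) *
      ((List.range k).map fun i => a (i + 1)).formPerm =
      Equiv.swap (n + 1) (n + 2) := by
  apply key (n + 1) (n + 2) (by omega) k hk a
  · intro i h1 h2
    have := ha i (Finset.mem_Icc.mpr ⟨h1, h2⟩)
    rw [Finset.mem_Icc] at this
    omega
  · intro i j h1 h2 h3 h4 heq
    exact hinj (Set.mem_Icc.mpr ⟨h1, h2⟩) (Set.mem_Icc.mpr ⟨h3, h4⟩) heq
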